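/- arXiv:1311.6028 — 2 statements merged into one kernel-verified Lean document; each statement's English description precedes it below -/
import Mathlib

section
/- For r > 0, i, k ∈ ℕ, and A ∈ ℂ with sufficiently large real part, ∫_{−r}^{r} (−s)^i · (d^k/dr^k evaluated as derivative in r of) ((s+r)^{A+l+n−i} / 2^{A+1+n−i+l−k}) ds = Σ_{j=0}^{i} (2^j i!/(i−j)!) (−r)^{i−j} d^k/dr^k [ Γ(A+l+n−i+1)/Γ(A+l+n−i+j+2) · r^{A+l+n−i+j+1} ], where on the left the k-fold r-derivative is applied to the integrand before integration. -/
open Complex Finset Set intervalIntegral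

lemma iterDeriv_cpow_shift (G w : ℂ) (s : ℝ) (k : ℕ) :
    ∀ x : ℝ, 0 < s + x →
    iteratedDeriv k (fun t : ℝ => G * (((s + t : ℝ) : ℂ)) ^ w) x
      = G * (∏ m ∈ Finset.range k, (w - m)) * (((s + x : ℝ) : ℂ)) ^ (w - k) := by
  induction k with
  | zero => intro x hx; simp
  | succ k ih =>
    intro x hx
    rw [iteratedDeriv_succ]
    have hE : (iteratedDeriv k (fun t : ℝ => G * (((s + t : ℝ) : ℂ)) ^ w))
        =ᶠ[nhds x] fun y : ℝ => G * (∏ m ∈ Finset.range k, (w - m)) *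
          (((s + y : ℝ) : ℂ)) ^ (w - k) := by
      filter_upwards [Ioi_mem_nhds (show -s < x by linarith)] with y hy
      exact ih y (by have := Set.mem_Ioi.mp hy; linarith)
    rw [hE.deriv_eq]
    have h1 : HasDerivAt (fun y : ℝ => (((s + y : ℝ) : ℂ))) 1 x := by
      have := (Complex.ofRealCLM.hasDerivAt (x := x)).const_add ((s : ℝ) : ℂ)
      simpa [Complex.ofReal_add] using this
    have hc : HasDerivAt (fun z : ℂ => ((s : ℂ) + z) ^ (w - k))
        ((w - k) * ((s : ℂ) + (x : ℂ)) ^ (w - k - 1) * 1) (x : ℂ) :=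
      HasDerivAt.cpow_const ((hasDerivAt_id ((x : ℝ) : ℂ)).const_add _)
        (by rw [← Complex.ofReal_add, Complex.ofReal_mem_slitPlane]; exact hx)
    have h2 : HasDerivAt (fun y : ℝ => (((s + y : ℝ) : ℂ)) ^ (w - k))
        ((w - k) * (((s + x : ℝ) : ℂ)) ^ (w - k - 1) * 1) x := by
      have := hc.comp_ofReal
      simpa [Complex.ofReal_add] using this
    rw [((h2.const_mul (G * ∏ m ∈ Finset.range k, (w - m)))).deriv]
    rw [Finset.prod_range_succ]
    have he : w - (k : ℂ) - 1 = w - ((k + 1 : ℕ) : ℂ) := by push_cast; ring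
    rw [← he]
    push_cast
    ring

lemma Gamma_prod_aux (z : ℂ) (hz : 0 < z.re) : ∀ q : ℕ,
    Complex.Gamma (z + q) = Complex.Gamma z * ∏ t ∈ Finset.range q, (z + t) := by
  intro q
  induction q with
  | zero => simp
  | succ q ih =>
    have hzq : z + (q : ℂ) ≠ 0 := by
      intro h
      have : (z + (q : ℂ)).re = 0 := by rw [h]; simp
      simp only [Complex.add_re, Complex.natCast_re] at this
      have hq : (0:ℝ) ≤ (q:ℝ) := Nat.cast_nonneg q
      linarith
    have h1 : z + ((q + 1 : ℕ) : ℂ) = (z + q) + 1 := by push_cast; ring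
    rw [h1, Complex.Gamma_add_one _ hzq, ih, Finset.prod_range_succ]
    ring

lemma intJ (b : ℝ) (hb : 0 < b) (c : ℂ) :
    ∀ (i : ℕ) (m : ℂ), 0 < m.re →
    (∫ u in (0:ℝ)..b, (c - (u:ℂ)) ^ i * (u:ℂ) ^ m)
      = ∑ j ∈ Finset.range (i+1), ((i.factorial : ℂ) / (((i - j).factorial : ℕ) : ℂ))
          * (c - (b:ℂ)) ^ (i - j) * (b:ℂ) ^ (m + 1 + j)
          / ∏ t ∈ Finset.range (j+1), (m + 1 + t) := by
  intro i
  induction i with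
  | zero =>
    intro m hm
    have hm1 : m + 1 ≠ 0 := by
      intro h
      have : (m + 1).re = 0 := by rw [h]; simp
      simp only [Complex.add_re, Complex.one_re] at this
      linarith
    simp only [pow_zero, one_mul, Finset.sum_range_one]
    rw [integral_cpow (Or.inl (by linarith))]
    simp [Complex.zero_cpow hm1]
  | succ i ih =>
    intro m hm
    have hm1 : m + 1 ≠ 0 := by
      intro h
      have : (m + 1).re = 0 := by rw [h]; simp
      simp only [Complex.add_re, Complex.one_re] at this
      linarith
    have hmne : m ≠ -1 := by
      intro h; rw [h] at hm; norm_num at hm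
    -- integration by parts
    have key := intervalIntegral.integral_mul_deriv_eq_deriv_mul_of_hasDeriv_right
      (a := (0:ℝ)) (b := b)
      (u := fun x : ℝ => (c - (x:ℂ)) ^ (i+1))
      (v := fun x : ℝ => (x:ℂ) ^ (m+1) / (m+1))
      (u' := fun x : ℝ => -((i:ℂ)+1) * (c - (x:ℂ)) ^ i)
      (v' := fun x : ℝ => (x:ℂ) ^ m)
      (by exact ((continuous_const.sub Complex.continuous_ofReal).pow _).continuousOn)
      (by exact ((Complex.continuous_ofReal_cpow_const
            (by simp only [Complex.add_re, Complex.one_re]; linarith)).div_const _).continuousOn)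
      (fun x hx => by
        have h1 : HasDerivAt (fun x : ℝ => (c - (x:ℂ)) ^ (i+1))
            ((((i+1:ℕ)):ℂ) * (c - (x:ℂ)) ^ i * (-1)) x := by
          have hz : HasDerivAt (fun z : ℂ => (c - z) ^ (i+1))
              ((((i+1:ℕ)):ℂ) * (c - (x:ℂ)) ^ ((i+1)-1) * (-1)) ((x:ℝ):ℂ) :=
            ((hasDerivAt_id ((x:ℝ):ℂ)).const_sub c).pow (i+1)
          simpa using hz.comp_ofReal
        have : HasDerivAt (fun x : ℝ => (c - (x:ℂ)) ^ (i+1))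
            (-((i:ℂ)+1) * (c - (x:ℂ)) ^ i) x := by
          convert h1 using 1; push_cast; ring
        exact this.hasDerivWithinAt)
      (fun x hx => by
        rw [min_def, max_def] at hx
        simp only [if_pos hb.le] at hx
        exact (hasDerivAt_ofReal_cpow_const' hx.1.ne' hmne).hasDerivWithinAt)
      (by exact ((continuous_const.mul
            ((continuous_const.sub Complex.continuous_ofReal).pow _))).intervalIntegrable _ _)
      (intervalIntegrable_cpow' (by linarith))
    -- simplify boundary term at 0
    simp only [Complex.ofReal_zero, Complex.zero_cpow hm1, zero_div, mul_zero, sub_zero] at key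
    rw [key]
    -- pull constants out of the remaining integral
    have hpull : (∫ x in (0:ℝ)..b, -((i:ℂ)+1) * (c - (x:ℂ)) ^ i * ((x:ℂ) ^ (m+1) / (m+1)))
        = (-((i:ℂ)+1) / (m+1)) * ∫ x in (0:ℝ)..b, (c - (x:ℂ)) ^ i * (x:ℂ) ^ (m+1) := by
      rw [← intervalIntegral.integral_const_mul]
      apply intervalIntegral.integral_congr
      intro x _
      simp only
      ring
    rw [hpull, ih (m+1) (by simp only [Complex.add_re, Complex.one_re]; linarith)]
    -- now pure algebra with sums
    rw [Finset.sum_range_succ' (n := i + 1)]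
    rw [Finset.mul_sum]
    have h0term : ((((i+1).factorial : ℕ) : ℂ) / ((((i+1) - 0).factorial : ℕ) : ℂ))
          * (c - (b:ℂ)) ^ ((i+1) - 0) * (b:ℂ) ^ (m + 1 + (0:ℕ))
          / ∏ t ∈ Finset.range (0+1), (m + 1 + t)
        = (c - (b:ℂ)) ^ (i+1) * ((b:ℂ) ^ (m+1) / (m+1)) := by
      simp only [Nat.sub_zero, zero_add, Finset.prod_range_one, Nat.cast_zero, add_zero]
      rw [div_self (by exact_mod_cast Nat.cast_ne_zero.mpr (Nat.factorial_ne_zero (i+1)))]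
      ring
    rw [h0term]
    have hterm : ∀ j ∈ Finset.range (i+1),
        ((((i+1).factorial : ℕ) : ℂ) / ((((i+1) - (j+1)).factorial : ℕ) : ℂ))
          * (c - (b:ℂ)) ^ ((i+1) - (j+1)) * (b:ℂ) ^ (m + 1 + ((j+1 : ℕ) : ℂ))
          / ∏ t ∈ Finset.range ((j+1)+1), (m + 1 + t)
        = -(-((i:ℂ)+1) / (m+1) * (((i.factorial : ℕ) : ℂ) / (((i - j).factorial : ℕ) : ℂ)
            * (c - (b:ℂ)) ^ (i - j) * (b:ℂ) ^ (m + 1 + 1 + j)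
            / ∏ t ∈ Finset.range (j+1), (m + 1 + 1 + t))) := by
      intro j hj
      have hprod : ∏ t ∈ Finset.range ((j+1)+1), (m + 1 + t)
          = (∏ t ∈ Finset.range (j+1), (m + 1 + 1 + t)) * (m + 1) := by
        rw [Finset.prod_range_succ' (fun t => m + 1 + (t:ℂ)) (j+1)]
        simp only [Nat.cast_zero, add_zero, Nat.cast_add, Nat.cast_one]
        congr 1
        apply Finset.prod_congr rfl
        intro t _
        push_cast
        ring
      have hexp : m + 1 + ((j+1 : ℕ) : ℂ) = m + 1 + 1 + (j : ℂ) := by push_cast; ring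
      have hfac : (((i+1) - (j+1)).factorial : ℕ) = (i - j).factorial := by
        rw [Nat.succ_sub_succ]
      have hfac2 : (((i+1).factorial : ℕ) : ℂ) = ((i:ℂ)+1) * ((i.factorial : ℕ) : ℂ) := by
        rw [Nat.factorial_succ]; push_cast; ring
      have hsub : (i+1) - (j+1) = i - j := Nat.succ_sub_succ i j
      rw [hprod, hexp, hfac, hfac2, hsub]
      simp only [div_eq_mul_inv, mul_inv]
      ring
    rw [Finset.sum_congr rfl hterm]
    rw [Finset.sum_neg_distrib]
    ring

lemma alg_aux (X Pk D Q G Fc c tj rE : ℂ) (hX : X ≠ 0) (hG : G ≠ 0) (hQ : Q ≠ 0) :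
    (X⁻¹ * Pk) * (Fc * c * (X * tj * rE) / D)
      = tj * Fc * c * ((G * Pk) / (G * (D * Q)) * Q * rE) := by
  rcases eq_or_ne D 0 with hD | hD
  · simp [hD]
  · field_simp


set_option maxHeartbeats 2000000 in
theorem stmt17 (l n i k : ℕ) (hin : i ≤ n) (r : ℝ) (hr : 0 < r) :
    ∃ C : ℝ, ∀ A : ℂ, C < A.re →
      (∫ s in (-r)..r, (-(s : ℂ)) ^ i *
          iteratedDeriv k
            (fun t : ℝ => (((s + t : ℝ) : ℂ)) ^ (A + l + n - i) /
              (2 : ℂ) ^ (A + 1 + (n : ℂ) - i + l - k)) r)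
        = ∑ j ∈ Finset.range (i + 1),
            (2 : ℂ) ^ j * ((i.factorial : ℂ) / ((i - j).factorial : ℂ)) *
              (-(r : ℂ)) ^ (i - j) *
              iteratedDeriv k
                (fun t : ℝ =>
                  Complex.Gamma (A + l + n - i + 1) /
                    Complex.Gamma (A + l + n - i + j + 2) *
                    ((t : ℂ)) ^ (A + (l : ℂ) + n - i + j + 1)) r := by
  refine ⟨(k : ℝ) + i + l + n + 3, fun A hA => ?_⟩
  have hl0 : (0:ℝ) ≤ (l:ℝ) := Nat.cast_nonneg l
  have hn0 : (0:ℝ) ≤ (n:ℝ) := Nat.cast_nonneg n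
  have hi0 : (0:ℝ) ≤ (i:ℝ) := Nat.cast_nonneg i
  have hk0 : (0:ℝ) ≤ (k:ℝ) := Nat.cast_nonneg k
  set w : ℂ := A + l + n - i with hw
  set e : ℂ := A + 1 + (n : ℂ) - i + l - k with he
  set z₀ : ℂ := w - k + 1 with hz₀
  have hwre : w.re = A.re + l + n - i := by
    rw [hw]; simp [Complex.add_re, Complex.sub_re, Complex.natCast_re]
  have hz₀re : 0 < z₀.re := by
    rw [hz₀]
    simp only [Complex.add_re, Complex.sub_re, Complex.one_re, Complex.natCast_re, hwre]
    linarith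
  have hmre : 0 < (w - (k:ℂ)).re := by
    simp only [Complex.sub_re, Complex.natCast_re, hwre]; linarith
  have h2e : (2:ℂ) ^ e ≠ 0 := by
    simp [Complex.cpow_eq_zero_iff]
  have hP : ∏ m ∈ Finset.range k, (w - (m:ℂ)) = ∏ t ∈ Finset.range k, (z₀ + t) := by
    rw [← Finset.prod_range_reflect (fun t => w - ((t:ℕ):ℂ)) k]
    apply Finset.prod_congr rfl
    intro t ht
    have htk : t < k := Finset.mem_range.mp ht
    have h1 : k - 1 - t = k - (t + 1) := by omega
    rw [h1, Nat.cast_sub (by omega)]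
    rw [hz₀]
    push_cast
    ring
  -- Step 1: rewrite integrand of LHS
  have hLfun : ∀ s : ℝ, (fun t : ℝ => (((s + t : ℝ) : ℂ)) ^ w / (2:ℂ) ^ e)
      = fun t : ℝ => ((2:ℂ) ^ e)⁻¹ * (((s + t : ℝ) : ℂ)) ^ w := by
    intro s; funext t; rw [div_eq_mul_inv, mul_comm]
  have hL1 : (∫ s in (-r)..r, (-(s : ℂ)) ^ i *
        iteratedDeriv k (fun t : ℝ => (((s + t : ℝ) : ℂ)) ^ w / (2:ℂ) ^ e) r)
      = ∫ s in (-r)..r, (((2:ℂ) ^ e)⁻¹ * ∏ m ∈ Finset.range k, (w - m)) *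
          ((-(s : ℂ)) ^ i * (((s + r : ℝ) : ℂ)) ^ (w - k)) := by
    apply intervalIntegral.integral_congr_ae
    apply Filter.Eventually.of_forall
    intro s hs
    rw [Set.uIoc_of_le (by linarith : -r ≤ r)] at hs
    have hsr : 0 < s + r := by have := hs.1; linarith
    rw [hLfun s, iterDeriv_cpow_shift _ w s k r hsr]
    ring
  rw [hL1, intervalIntegral.integral_const_mul]
  -- Step 2: substitution u = s + r
  have hsub : (∫ s in (-r)..r, (-(s : ℂ)) ^ i * (((s + r : ℝ) : ℂ)) ^ (w - k))
      = ∫ u in (0:ℝ)..(2*r), ((r:ℂ) - (u:ℂ)) ^ i * (u:ℂ) ^ (w - k) := by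
    have h1 := intervalIntegral.integral_comp_add_right (a := -r) (b := r)
      (f := fun u : ℝ => ((r:ℂ) - (u:ℂ)) ^ i * (u:ℂ) ^ (w - k)) r
    rw [neg_add_cancel] at h1
    rw [show r + r = 2*r by ring] at h1
    rw [← h1]
    apply intervalIntegral.integral_congr
    intro s _
    simp only
    push_cast
    ring_nf
  rw [hsub, intJ (2*r) (by linarith) (r:ℂ) i (w - k) hmre]
  -- Step 3: rewrite RHS iterated derivatives
  have hRD : ∀ j : ℕ,
      iteratedDeriv k (fun t : ℝ =>
          Complex.Gamma (w + 1) / Complex.Gamma (w + j + 2) * ((t : ℂ)) ^ (w + j + 1)) r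
      = Complex.Gamma (w + 1) / Complex.Gamma (w + j + 2) *
          (∏ m ∈ Finset.range k, (w + j + 1 - m)) * ((r : ℂ)) ^ (w + j + 1 - k) := by
    intro j
    have := iterDeriv_cpow_shift
      (Complex.Gamma (w + 1) / Complex.Gamma (w + j + 2)) (w + j + 1) 0 k r (by linarith)
    simpa [zero_add] using this
  simp only [hRD]
  -- Step 4: termwise equality
  rw [Finset.mul_sum]
  apply Finset.sum_congr rfl
  intro j hj
  -- facts about Gamma
  have hD_ne : ∀ t : ℕ, z₀ + (t:ℂ) ≠ 0 := by
    intro t h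
    have : (z₀ + (t:ℂ)).re = 0 := by rw [h]; simp
    simp only [Complex.add_re, Complex.natCast_re] at this
    have := Nat.cast_nonneg (α := ℝ) t
    linarith
  have hGa : Complex.Gamma (w + 1) = Complex.Gamma z₀ * ∏ t ∈ Finset.range k, (z₀ + t) := by
    have h1 : w + 1 = z₀ + (k:ℂ) := by rw [hz₀]; ring
    rw [h1, Gamma_prod_aux z₀ hz₀re k]
  have hGb : Complex.Gamma (w + j + 2)
      = Complex.Gamma z₀ * ((∏ t ∈ Finset.range (j+1), (z₀ + t)) *
          ∏ t ∈ Finset.range k, (z₀ + ((j+1+t : ℕ):ℂ))) := by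
    have h1 : w + j + 2 = z₀ + ((j + 1 + k : ℕ):ℂ) := by rw [hz₀]; push_cast; ring
    rw [h1, Gamma_prod_aux z₀ hz₀re (j+1+k), Finset.prod_range_add (fun t => z₀ + (t:ℂ)) (j+1) k]
  have hPj : ∏ m ∈ Finset.range k, (w + j + 1 - (m:ℂ))
      = ∏ t ∈ Finset.range k, (z₀ + ((j+1+t : ℕ):ℂ)) := by
    rw [← Finset.prod_range_reflect (fun t => w + j + 1 - ((t:ℕ):ℂ)) k]
    apply Finset.prod_congr rfl
    intro t ht
    have htk : t < k := Finset.mem_range.mp ht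
    have h1 : k - 1 - t = k - (t + 1) := by omega
    rw [h1, Nat.cast_sub (by omega)]
    rw [hz₀]
    push_cast
    ring
  have hprodD : ∏ t ∈ Finset.range (j+1), (w - (k:ℂ) + 1 + t)
      = ∏ t ∈ Finset.range (j+1), (z₀ + t) := by
    apply Finset.prod_congr rfl; intro t _; rw [hz₀]
  have hDne : (∏ t ∈ Finset.range (j+1), (z₀ + (t:ℂ))) ≠ 0 :=
    Finset.prod_ne_zero_iff.mpr fun t _ => hD_ne t
  have hPjne : (∏ t ∈ Finset.range k, (z₀ + ((j+1+t : ℕ):ℂ))) ≠ 0 :=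
    Finset.prod_ne_zero_iff.mpr fun t _ => hD_ne (j+1+t)
  have hGz_ne : Complex.Gamma z₀ ≠ 0 := Complex.Gamma_ne_zero_of_re_pos hz₀re
  -- base 2r splitting
  have h2r : ((2*r : ℝ) : ℂ) ^ (w - (k:ℂ) + 1 + (j:ℂ))
      = (2:ℂ) ^ e * (2:ℂ) ^ (j:ℂ) * ((r:ℝ):ℂ) ^ (w - (k:ℂ) + 1 + (j:ℂ)) := by
    have hb : ((2*r : ℝ) : ℂ) = ((2:ℝ):ℂ) * ((r:ℝ):ℂ) := by push_cast; ring
    rw [hb, mul_cpow_ofReal_nonneg (by norm_num) hr.le]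
    have h2 : ((2:ℝ):ℂ) = (2:ℂ) := by norm_num
    rw [h2]
    have hexp : w - (k:ℂ) + 1 + (j:ℂ) = e + (j:ℂ) := by rw [he, hw]; ring
    rw [hexp, Complex.cpow_add _ _ (two_ne_zero)]
  have hrexp : ((r:ℝ):ℂ) ^ (w - (k:ℂ) + 1 + (j:ℂ)) = ((r:ℝ):ℂ) ^ (w + (j:ℂ) + 1 - (k:ℂ)) := by
    congr 1; ring
  have hbase : ((r:ℝ):ℂ) - ((2*r : ℝ):ℂ) = -((r:ℝ):ℂ) := by push_cast; ring
  have h2j : (2:ℂ) ^ ((j:ℕ):ℂ) = (2:ℂ) ^ (j:ℕ) := Complex.cpow_natCast 2 j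
  rw [hbase, h2r, hrexp, h2j, hP, hPj, hGa, hGb, hprodD]
  exact alg_aux _ _ _ _ _ _ _ _ _ h2e hGz_ne hPjne
end

section
/- On ℝ³ \ {0}, for any l ∈ ℕ and s ∈ ℂ, the Laplacian of n̂_L r^s equals (s−l)(s+l+1) n̂_L r^{s−2}. Consequently, for i ∈ ℕ, the i-fold iterated inverse given by successive division, namely n̂_L r^{l+2i} mapped back by Δ, satisfies Δ^i ( (2l+1)!!/((2i)!!(2l+2i+1)!!) · r^{2i} x̂_L ) = x̂_L, i.e. (Δ̃⁻¹)^i[x̂_L] = ((2l+1)!!/((2i)!!(2l+2i+1)!!)) r^{2i} x̂_L. -/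
open scoped Nat

/-- A rank-`l` Cartesian tensor on ℝ³, given by its components. -/
abbrev Tensor (l : ℕ) := (Fin l → Fin 3) → ℝ

/-- The natural inner product of two rank-`l` tensors (full contraction). -/
noncomputable def tInner {l : ℕ} (S T : Tensor l) : ℝ :=
  ∑ I : Fin l → Fin 3, S I * T I

/-- A tensor is symmetric if invariant under all index permutations. -/
def IsSym {l : ℕ} (T : Tensor l) : Prop :=
  ∀ (σ : Equiv.Perm (Fin l)) (I : Fin l → Fin 3), T (I ∘ σ) = T I

/-- A tensor is trace-free if the contraction of any pair of distinct indices
vanishes. -/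
def IsTraceFree {l : ℕ} (T : Tensor l) : Prop :=
  ∀ p q : Fin l, p ≠ q → ∀ I : Fin l → Fin 3,
    ∑ a : Fin 3, T (Function.update (Function.update I p a) q a) = 0

/-- Symmetric and trace-free. -/
def IsSTF {l : ℕ} (T : Tensor l) : Prop := IsSym T ∧ IsTraceFree T

/-- `That` is the symmetric trace-free part of `T`: it is STF and `T − That`
is orthogonal to every STF tensor (i.e. `That` is the orthogonal projection of
`T` onto the subspace of STF tensors). -/
def IsSTFPartOf {l : ℕ} (That T : Tensor l) : Prop :=
  IsSTF That ∧ ∀ S : Tensor l, IsSTF S → tInner (T - That) S = 0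

/-- The `l`-fold tensor product of a vector with itself. -/
def vecPow (n : Fin 3 → ℝ) (l : ℕ) : Tensor l := fun I => ∏ j, n (I j)

noncomputable section

abbrev E3 := EuclideanSpace ℝ (Fin 3)

/-- The flat-space Laplacian: the sum of the second Cartesian partial
derivatives. -/
def lap (g : E3 → ℂ) : E3 → ℂ := fun x =>
  ∑ i : Fin 3,
    fderiv ℝ (fun y => fderiv ℝ g y (EuclideanSpace.single i 1)) x
      (EuclideanSpace.single i 1)

namespace Aux

/-! ### Combinatorial layer -/



def poly {m : ℕ} (T : Tensor m) (y : E3) : ℝ :=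
  ∑ J : Fin m → Fin 3, T J * ∏ j, y (J j)

def dPoly {m : ℕ} (T : Tensor m) (i : Fin 3) (y : E3) : ℝ :=
  ∑ J : Fin m → Fin 3, T J *
    ∑ p : Fin m, (if J p = i then ∏ j ∈ Finset.univ.erase p, y (J j) else 0)

def DP {m : ℕ} (T : Tensor (m+1)) (i : Fin 3) : Tensor m := fun t => T (Fin.cons i t)

/-- perm of `Fin (m+1)` fixing 0 and acting as σ on successors -/
def succPerm {m : ℕ} (σ : Equiv.Perm (Fin m)) : Equiv.Perm (Fin (m+1)) :=
  ((finSuccEquiv m).trans σ.optionCongr).trans (finSuccEquiv m).symm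

@[simp] lemma succPerm_zero {m : ℕ} (σ : Equiv.Perm (Fin m)) : succPerm σ 0 = 0 := by
  simp [succPerm]

@[simp] lemma succPerm_succ {m : ℕ} (σ : Equiv.Perm (Fin m)) (j : Fin m) :
    succPerm σ j.succ = (σ j).succ := by
  simp [succPerm]

lemma cons_comp_succPerm {m : ℕ} (i : Fin 3) (t : Fin m → Fin 3) (σ : Equiv.Perm (Fin m)) :
    (Fin.cons i t : Fin (m+1) → Fin 3) ∘ (succPerm σ) = Fin.cons i (t ∘ σ) := by
  funext j
  refine Fin.cases ?_ (fun k => ?_) j <;> simp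

lemma DP_isSym {m : ℕ} {T : Tensor (m+1)} (hT : IsSym T) (i : Fin 3) : IsSym (DP T i) := by
  intro σ t
  have := hT (succPerm σ) (Fin.cons i t)
  rw [cons_comp_succPerm] at this
  simpa [DP] using this

lemma erase_zero_prod {m : ℕ} (f : Fin (m+1) → ℝ) :
    ∏ j ∈ Finset.univ.erase (0 : Fin (m+1)), f j = ∏ j : Fin m, f j.succ := by
  rw [Fin.univ_succ, Finset.erase_cons, Finset.prod_map]
  rfl

lemma sum_funsplit {m : ℕ} (F : (Fin (m+1) → Fin 3) → ℝ) :
    ∑ J : Fin (m+1) → Fin 3, F J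
      = ∑ a : Fin 3, ∑ t : Fin m → Fin 3, F (Fin.cons a t) := by
  calc ∑ J : Fin (m+1) → Fin 3, F J
      = ∑ p : Fin 3 × (Fin m → Fin 3), F (Fin.cons p.1 p.2) := by
        refine Fintype.sum_equiv (Fin.consEquiv (fun _ => Fin 3)).symm _ _ (fun J => ?_)
        have : Fin.cons (J 0) (fun i => J i.succ) = J := by
          funext j; exact Fin.cases rfl (fun k => rfl) j
        exact (congrArg F this).symm
    _ = _ := Fintype.sum_prod_type _

lemma dPoly_eq {m : ℕ} (T : Tensor (m+1)) (hT : IsSym T) (i : Fin 3) (y : E3) :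
    dPoly T i y = (m+1) * poly (DP T i) y := by
  have inner0 : (∑ J : Fin (m+1) → Fin 3,
      if J 0 = i then T J * ∏ j ∈ Finset.univ.erase (0:Fin (m+1)), y (J j) else 0)
      = poly (DP T i) y := by
    rw [sum_funsplit (fun J => if J 0 = i then T J * ∏ j ∈ Finset.univ.erase (0:Fin (m+1)), y (J j) else 0)]
    have key : ∀ (a : Fin 3) (t : Fin m → Fin 3),
        (if (Fin.cons a t : Fin (m+1) → Fin 3) 0 = i
          then T (Fin.cons a t) * ∏ j ∈ Finset.univ.erase (0:Fin (m+1)), (fun u => y u) ((Fin.cons a t : Fin (m+1) → Fin 3) j) else 0)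
        = (if a = i then T (Fin.cons a t) * ∏ j : Fin m, y (t j) else 0) := by
      intro a t
      have h1 : (Fin.cons a t : Fin (m+1) → Fin 3) 0 = a := rfl
      have h2 : ∏ j ∈ Finset.univ.erase (0:Fin (m+1)), y ((Fin.cons a t : Fin (m+1) → Fin 3) j)
          = ∏ j : Fin m, y (t j) := by
        rw [erase_zero_prod]
        exact Finset.prod_congr rfl fun j _ => by rw [Fin.cons_succ]
      rw [h1, h2]
    simp only [key]
    rw [Finset.sum_comm]
    simp only [Finset.sum_ite_eq', Finset.mem_univ, if_true]
    rfl
  have step1 : ∀ p : Fin (m+1),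
      (∑ J : Fin (m+1) → Fin 3,
        if J p = i then T J * ∏ j ∈ Finset.univ.erase p, y (J j) else 0)
      = ∑ J : Fin (m+1) → Fin 3,
        if J 0 = i then T J * ∏ j ∈ Finset.univ.erase (0:Fin (m+1)), y (J j) else 0 := by
    intro p
    refine (Fintype.sum_equiv (Equiv.arrowCongr (Equiv.swap (0:Fin (m+1)) p) (Equiv.refl (Fin 3))).symm _ _ (fun J => ?_)).symm
    have hJ : ((Equiv.arrowCongr (Equiv.swap (0:Fin (m+1)) p) (Equiv.refl (Fin 3))).symm J)
        = J ∘ (Equiv.swap (0:Fin (m+1)) p) := by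
      funext j; simp [Equiv.arrowCongr]
    rw [hJ]
    have hTJ : T (J ∘ (Equiv.swap (0:Fin (m+1)) p)) = T J := hT _ J
    have happ : (J ∘ (Equiv.swap (0:Fin (m+1)) p)) p = J 0 := by
      simp [Function.comp, Equiv.swap_apply_right]
    have hset : (Finset.univ.erase p).map (Equiv.swap (0:Fin (m+1)) p).toEmbedding
        = Finset.univ.erase (0:Fin (m+1)) := by
      rw [Finset.map_erase, Finset.map_univ_equiv]
      simp [Equiv.swap_apply_right]
    have hprod : ∏ j ∈ Finset.univ.erase p, y ((J ∘ (Equiv.swap (0:Fin (m+1)) p)) j)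
        = ∏ j ∈ Finset.univ.erase (0:Fin (m+1)), y (J j) := by
      calc ∏ j ∈ Finset.univ.erase p, y ((J ∘ (Equiv.swap (0:Fin (m+1)) p)) j)
          = ∏ j ∈ (Finset.univ.erase p).map (Equiv.swap (0:Fin (m+1)) p).toEmbedding, y (J j) := by
            rw [Finset.prod_map]; rfl
        _ = _ := by rw [hset]
    rw [hTJ, happ, hprod]
  have expand : dPoly T i y = ∑ p : Fin (m+1), ∑ J : Fin (m+1) → Fin 3,
      (if J p = i then T J * ∏ j ∈ Finset.univ.erase p, y (J j) else 0) := by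
    rw [dPoly]
    have hh : ∀ J : Fin (m+1) → Fin 3, T J * ∑ p : Fin (m+1),
        (if J p = i then ∏ j ∈ Finset.univ.erase p, y (J j) else 0)
        = ∑ p : Fin (m+1), (if J p = i then T J * ∏ j ∈ Finset.univ.erase p, y (J j) else 0) := by
      intro J
      rw [Finset.mul_sum]
      exact Finset.sum_congr rfl fun p _ => by rw [mul_ite, mul_zero]
    simp only [hh]
    rw [Finset.sum_comm]
  rw [expand]
  simp only [step1, inner0, Finset.sum_const, Finset.card_univ, Fintype.card_fin, nsmul_eq_mul]
  push_cast
  linear_combination ((m:ℝ) + 1) * inner0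

lemma euler {m : ℕ} (T : Tensor (m+1)) (y : E3) :
    ∑ i : Fin 3, y i * poly (DP T i) y = poly T y := by
  rw [poly, sum_funsplit (fun J => T J * ∏ j, y (J j))]
  refine (Finset.sum_congr rfl (fun a _ => ?_))
  rw [poly, Finset.mul_sum]
  refine Finset.sum_congr rfl (fun t _ => ?_)
  rw [Fin.prod_univ_succ]
  have h2 : ∏ j : Fin m, y ((Fin.cons a t : Fin (m+1) → Fin 3) j.succ) = ∏ j : Fin m, y (t j) :=
    Finset.prod_congr rfl fun j _ => by rw [Fin.cons_succ]
  rw [Fin.cons_zero, h2, DP]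
  ring

lemma trace_sum {m : ℕ} (T : Tensor (m+2)) (hTF : IsTraceFree T) (t : Fin m → Fin 3) :
    ∑ a : Fin 3, T (Fin.cons a (Fin.cons a t)) = 0 := by
  have h01 : (0 : Fin (m+2)) ≠ 1 := by simp [Fin.ext_iff]
  have key := hTF 0 1 h01 (Fin.cons 0 (Fin.cons 0 t))
  have hupd : ∀ a : Fin 3,
      Function.update (Function.update (Fin.cons (0:Fin 3) (Fin.cons (0:Fin 3) t) : Fin (m+2) → Fin 3) 0 a) 1 a
        = Fin.cons a (Fin.cons a t) := by
    intro a
    funext j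
    refine Fin.cases ?_ (fun k => ?_) j
    · rw [Function.update_of_ne h01, Function.update_self, Fin.cons_zero]
    · refine Fin.cases ?_ (fun k' => ?_) k
      · rw [Fin.succ_zero_eq_one, Function.update_self]
        rfl
      · have h1 : (k'.succ.succ : Fin (m+2)) ≠ 1 := by
          intro h
          rw [← Fin.succ_zero_eq_one] at h
          exact Fin.succ_ne_zero _ (Fin.succ_inj.mp h)
        have h0 : (k'.succ.succ : Fin (m+2)) ≠ 0 := Fin.succ_ne_zero _
        rw [Function.update_of_ne h1, Function.update_of_ne h0]
        rw [Fin.cons_succ, Fin.cons_succ, Fin.cons_succ, Fin.cons_succ]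
  have heq : ∑ a : Fin 3, T (Fin.cons a (Fin.cons a t))
      = ∑ a : Fin 3, T (Function.update (Function.update (Fin.cons (0:Fin 3) (Fin.cons (0:Fin 3) t) : Fin (m+2) → Fin 3) 0 a) 1 a) :=
    Finset.sum_congr rfl fun a _ => (congrArg T (hupd a)).symm
  rw [heq]
  exact key

lemma poly_sum_eq_zero {m : ℕ} (S : Fin 3 → Tensor m) (h : ∀ t, ∑ k : Fin 3, S k t = 0) (y : E3) :
    ∑ k : Fin 3, poly (S k) y = 0 := by
  simp only [poly]
  rw [Finset.sum_comm]
  refine Finset.sum_eq_zero (fun J _ => ?_)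
  rw [← Finset.sum_mul, h, zero_mul]

lemma dPoly_rank_zero (T : Tensor 0) (i : Fin 3) (y : E3) : dPoly T i y = 0 := by
  simp [dPoly]



/-! ### Analytic layer -/



def proj3 (i : Fin 3) : E3 →L[ℝ] ℝ := EuclideanSpace.proj i

@[simp] lemma proj3_apply (i : Fin 3) (v : E3) : proj3 i v = v i := rfl

lemma proj3_single_same (k : Fin 3) : proj3 k (EuclideanSpace.single k 1) = 1 := by
  simp [EuclideanSpace.single_apply]

lemma sumproj_apply (a : Fin 3 → ℝ) (k : Fin 3) :
    (∑ i : Fin 3, a i • proj3 i) (EuclideanSpace.single k 1) = a k := by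
  simp only [ContinuousLinearMap.sum_apply, ContinuousLinearMap.smul_apply, smul_eq_mul,
    proj3_apply, EuclideanSpace.single_apply]
  simp

def N2 (y : E3) : ℝ := ∑ i : Fin 3, y i * y i

lemma hasFDerivAt_N2 (y : E3) : HasFDerivAt N2 (∑ i : Fin 3, (2 * y i) • proj3 i) y := by
  have h : ∀ i ∈ Finset.univ, HasFDerivAt (fun z : E3 => z i * z i)
      ((y i) • proj3 i + (y i) • proj3 i) y :=
    fun i _ => ((proj3 i).hasFDerivAt (x := y)).mul ((proj3 i).hasFDerivAt)
  have := HasFDerivAt.sum h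
  have heq : (∑ i : Fin 3, ((y i) • proj3 i + (y i) • proj3 i))
      = ∑ i : Fin 3, (2 * y i) • proj3 i :=
    Finset.sum_congr rfl fun i _ => by rw [two_mul, add_smul]
  rw [heq] at this
  exact this

lemma N2_eq_norm (y : E3) : N2 y = ‖y‖ ^ 2 := by
  rw [EuclideanSpace.norm_eq, Real.sq_sqrt (by positivity)]
  refine Finset.sum_congr rfl fun i _ => ?_
  rw [Real.norm_eq_abs, sq_abs, sq]

lemma N2_pos {x : E3} (hx : x ≠ 0) : 0 < N2 x := by
  rw [N2_eq_norm]
  have : 0 < ‖x‖ := norm_pos_iff.mpr hx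
  positivity

lemma N2_ne_zeroC {x : E3} (hx : x ≠ 0) : (↑(N2 x) : ℂ) ≠ 0 := by
  exact_mod_cast (N2_pos hx).ne'

lemma hasFDerivAt_cpow_N2 (c : ℂ) {x : E3} (hx : x ≠ 0) :
    HasFDerivAt (fun y : E3 => (↑(N2 y) : ℂ) ^ c)
      ((c * ((↑(N2 x):ℂ))^(c-1)) • (Complex.ofRealCLM.comp (∑ i : Fin 3, (2 * x i) • proj3 i))) x := by
  have hN := hasFDerivAt_N2 x
  have hNC : HasFDerivAt (fun y : E3 => (↑(N2 y) : ℂ))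
      (Complex.ofRealCLM.comp (∑ i : Fin 3, (2 * x i) • proj3 i)) x :=
    Complex.ofRealCLM.hasFDerivAt.comp x hN
  have hslit : (↑(N2 x) : ℂ) ∈ Complex.slitPlane := Complex.ofReal_mem_slitPlane.2 (N2_pos hx)
  have hc : HasDerivAt (fun z : ℂ => z ^ c) (c * ((↑(N2 x):ℂ))^(c-1)) (↑(N2 x)) :=
    (Complex.hasStrictDerivAt_cpow_const hslit).hasDerivAt
  exact hc.comp_hasFDerivAt x hNC

lemma dPoly_spec {m : ℕ} (T : Tensor m) (y v : E3) :
    ∑ i : Fin 3, dPoly T i y * v i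
      = ∑ J : Fin m → Fin 3, T J * ∑ p : Fin m, (∏ j ∈ Finset.univ.erase p, y (J j)) * v (J p) := by
  simp only [dPoly, Finset.sum_mul]
  rw [Finset.sum_comm]
  refine Finset.sum_congr rfl fun J _ => ?_
  have h : ∀ i : Fin 3, (T J * ∑ p : Fin m,
      (if J p = i then ∏ j ∈ Finset.univ.erase p, y (J j) else 0)) * v i
      = ∑ p : Fin m, (if J p = i then T J * ((∏ j ∈ Finset.univ.erase p, y (J j)) * v i) else 0) := by
    intro i
    rw [Finset.mul_sum, Finset.sum_mul]
    refine Finset.sum_congr rfl fun p _ => ?_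
    by_cases hc : J p = i <;> simp [hc, mul_assoc]
  simp only [h]
  rw [Finset.sum_comm, Finset.mul_sum]
  refine Finset.sum_congr rfl fun p _ => ?_
  simp [Finset.sum_ite_eq]

lemma hasFDerivAt_poly {m : ℕ} (T : Tensor m) (y : E3) :
    HasFDerivAt (poly T) (∑ i : Fin 3, dPoly T i y • proj3 i) y := by
  have hmono : ∀ J : Fin m → Fin 3, HasFDerivAt (fun z : E3 => ∏ j, z (J j))
      (∑ p : Fin m, (∏ j ∈ Finset.univ.erase p, y (J j)) • proj3 (J p)) y := by
    intro J
    exact HasFDerivAt.finset_prod (fun j _ => (proj3 (J j)).hasFDerivAt)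
  have hsum : HasFDerivAt (fun z : E3 => ∑ J : Fin m → Fin 3, T J * ∏ j, z (J j))
      (∑ J : Fin m → Fin 3,
        T J • (∑ p : Fin m, (∏ j ∈ Finset.univ.erase p, y (J j)) • proj3 (J p))) y :=
    HasFDerivAt.fun_sum (fun J _ => (hmono J).const_mul (T J))
  have heq : (∑ i : Fin 3, dPoly T i y • proj3 i)
      = ∑ J : Fin m → Fin 3,
          T J • (∑ p : Fin m, (∏ j ∈ Finset.univ.erase p, y (J j)) • proj3 (J p)) := by
    apply ContinuousLinearMap.ext
    intro v
    simp only [ContinuousLinearMap.sum_apply, ContinuousLinearMap.smul_apply, smul_eq_mul,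
      proj3_apply]
    exact dPoly_spec T y v
  rw [heq]
  exact hsum

lemma lapG (A c : ℂ) (u : E3 → ℝ) (u' : Fin 3 → E3 → ℝ) (u'' : Fin 3 → Fin 3 → E3 → ℝ)
    (hu : ∀ y : E3, HasFDerivAt u (∑ i : Fin 3, u' i y • proj3 i) y)
    (hu' : ∀ k : Fin 3, ∀ y : E3, HasFDerivAt (u' k) (∑ i : Fin 3, u'' k i y • proj3 i) y)
    (x : E3) (hx : x ≠ 0) :
    lap (fun y => A * ↑(u y) * (↑(N2 y)) ^ c) x
      = A * ((↑(∑ k : Fin 3, u'' k k x) * (↑(N2 x)) ^ c)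
          + (4*c*(↑(∑ k : Fin 3, x k * u' k x)) + (4*c*(c-1) + 6*c) * ↑(u x)) * (↑(N2 x)) ^ (c-1)) := by
  have hU : {(0:E3)}ᶜ ∈ nhds x := compl_singleton_mem_nhds hx
  set F : E3 → ℂ := fun y => A * ↑(u y) * (↑(N2 y)) ^ c with hF_def
  -- first derivative
  have hF : ∀ y : E3, y ≠ 0 → HasFDerivAt F
      ((A * ↑(u y)) • ((c * ((↑(N2 y):ℂ))^(c-1)) • (Complex.ofRealCLM.comp (∑ i : Fin 3, (2 * y i) • proj3 i)))
        + (((↑(N2 y):ℂ))^c) • (A • (Complex.ofRealCLM.comp (∑ i : Fin 3, u' i y • proj3 i)))) y := by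
    intro y hy
    have h1 : HasFDerivAt (fun z : E3 => A * ↑(u z))
        (A • (Complex.ofRealCLM.comp (∑ i : Fin 3, u' i y • proj3 i))) y :=
      (Complex.ofRealCLM.hasFDerivAt.comp y (hu y)).const_mul A
    exact h1.mul (hasFDerivAt_cpow_N2 c hy)
  set gk : Fin 3 → E3 → ℂ := fun k y =>
    (A * ↑(u y)) * ((c * ((↑(N2 y):ℂ))^(c-1)) * ↑(2 * y k)) + ((↑(N2 y):ℂ))^c * (A * ↑(u' k y)) with hgk_def
  have hfd : ∀ k : Fin 3, ∀ y : E3, y ≠ 0 →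
      fderiv ℝ F y (EuclideanSpace.single k 1) = gk k y := by
    intro k y hy
    rw [(hF y hy).fderiv]
    simp only [ContinuousLinearMap.add_apply, ContinuousLinearMap.smul_apply,
      ContinuousLinearMap.comp_apply, Complex.ofRealCLM_apply, sumproj_apply, smul_eq_mul,
      proj3_single_same, hgk_def]
    try push_cast
    try ring
  -- second derivative of gk
  have hgd : ∀ k : Fin 3,
      fderiv ℝ (gk k) x (EuclideanSpace.single k 1)
        = (A * ↑(u x)) * ((c * ((↑(N2 x):ℂ))^(c-1)) * 2
              + ↑(2 * x k) * ((c * ((c-1) * ((↑(N2 x):ℂ))^(c-1-1))) * ↑(2 * x k)))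
          + ((c * ((↑(N2 x):ℂ))^(c-1)) * ↑(2 * x k)) * (A * ↑(u' k x))
          + (((↑(N2 x):ℂ))^c * (A * ↑(u'' k k x))
              + (A * ↑(u' k x)) * ((c * ((↑(N2 x):ℂ))^(c-1)) * ↑(2 * x k))) := by
    intro k
    have t1 : HasFDerivAt (fun z : E3 => A * ↑(u z))
        (A • (Complex.ofRealCLM.comp (∑ i : Fin 3, u' i x • proj3 i))) x :=
      (Complex.ofRealCLM.hasFDerivAt.comp x (hu x)).const_mul A
    have t2 : HasFDerivAt (fun z : E3 => c * (↑(N2 z))^(c-1))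
        (c • (((c-1) * ((↑(N2 x):ℂ))^(c-1-1)) • (Complex.ofRealCLM.comp (∑ i : Fin 3, (2 * x i) • proj3 i)))) x :=
      (hasFDerivAt_cpow_N2 (c-1) hx).const_mul c
    have t3 : HasFDerivAt (fun z : E3 => (↑(2 * z k) : ℂ))
        (Complex.ofRealCLM.comp ((2:ℝ) • proj3 k)) x := by
      have : HasFDerivAt (fun z : E3 => 2 * z k) ((2:ℝ) • proj3 k) x :=
        ((proj3 k).hasFDerivAt (x := x)).const_mul 2
      exact Complex.ofRealCLM.hasFDerivAt.comp x this
    have s1 := hasFDerivAt_cpow_N2 c hx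
    have s2 : HasFDerivAt (fun z : E3 => A * ↑(u' k z))
        (A • (Complex.ofRealCLM.comp (∑ i : Fin 3, u'' k i x • proj3 i))) x :=
      (Complex.ofRealCLM.hasFDerivAt.comp x (hu' k x)).const_mul A
    have htot := (t1.fun_mul (t2.fun_mul t3)).fun_add (s1.fun_mul s2)
    rw [htot.fderiv]
    simp only [ContinuousLinearMap.add_apply, ContinuousLinearMap.smul_apply,
      ContinuousLinearMap.comp_apply, Complex.ofRealCLM_apply, sumproj_apply, smul_eq_mul,
      proj3_single_same]
    try push_cast
    try ring
  -- assemble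
  have hlap : lap F x = ∑ k : Fin 3, fderiv ℝ (gk k) x (EuclideanSpace.single k 1) := by
    rw [lap]
    refine Finset.sum_congr rfl fun k _ => ?_
    have hev : (fun y => fderiv ℝ F y (EuclideanSpace.single k 1)) =ᶠ[nhds x] gk k :=
      Filter.eventuallyEq_of_mem hU (fun y hy => hfd k y hy)
    rw [hev.fderiv_eq]
  have hkey : (↑(N2 x):ℂ)^(c-1-1) * ↑(N2 x) = ((↑(N2 x):ℂ))^(c-1) := by
    have h0 := N2_ne_zeroC hx
    calc (↑(N2 x):ℂ)^(c-1-1) * ↑(N2 x) = (↑(N2 x):ℂ)^(c-1-1) * ((↑(N2 x):ℂ))^(1:ℂ) := by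
          rw [Complex.cpow_one]
      _ = ((↑(N2 x):ℂ))^(c-1-1+1) := (Complex.cpow_add _ _ h0).symm
      _ = ((↑(N2 x):ℂ))^(c-1) := by ring_nf
  rw [hlap]
  have hsum : ∑ k : Fin 3, fderiv ℝ (gk k) x (EuclideanSpace.single k 1)
      = ∑ k : Fin 3,
        ((A * ((↑(N2 x):ℂ))^c) * ↑(u'' k k x)
          + (A * (4*c*((↑(N2 x):ℂ))^(c-1))) * ↑(x k * u' k x)
          + (A * ↑(u x) * (4*c*(c-1) * ((↑(N2 x):ℂ))^(c-1-1))) * ↑(x k * x k)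
          + A * ↑(u x) * (2*c*((↑(N2 x):ℂ))^(c-1))) := by
    refine Finset.sum_congr rfl fun k _ => ?_
    rw [hgd k]
    push_cast
    ring
  rw [hsum]
  have hsplit : ∀ (C1 C2 C3 C4 : ℂ) (f1 f2 f3 : Fin 3 → ℝ),
      ∑ k : Fin 3, (C1 * ↑(f1 k) + C2 * ↑(f2 k) + C3 * ↑(f3 k) + C4)
        = C1 * ↑(∑ k : Fin 3, f1 k) + C2 * ↑(∑ k : Fin 3, f2 k)
          + C3 * ↑(∑ k : Fin 3, f3 k) + 3 * C4 := by
    intro C1 C2 C3 C4 f1 f2 f3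
    simp only [Finset.sum_add_distrib, ← Finset.mul_sum, Finset.sum_const, Finset.card_univ,
      Fintype.card_fin, nsmul_eq_mul, Complex.ofReal_sum]
    push_cast
    ring
  rw [hsplit]
  have hN2sum : (∑ k : Fin 3, x k * x k) = N2 x := rfl
  rw [hN2sum]
  have : (A * ↑(u x) * (4*c*(c-1) * ((↑(N2 x):ℂ))^(c-1-1))) * ↑(N2 x)
      = A * ↑(u x) * (4*c*(c-1) * ((↑(N2 x):ℂ))^(c-1)) := by
    rw [mul_assoc (A * ↑(u x)), mul_assoc (4*c*(c-1)), hkey]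
  rw [this]
  ring



/-! ### Specialization to harmonic polynomials from STF tensors -/

lemma euler_dPoly {m : ℕ} (T : Tensor m) (hS : IsSym T) (y : E3) :
    ∑ k : Fin 3, y k * dPoly T k y = m * poly T y := by
  match m, T, hS with
  | 0, T, hS => simp [dPoly_rank_zero]
  | (m'+1), T, hS =>
    have h : ∀ k : Fin 3, y k * dPoly T k y = ((m'+1:ℕ):ℝ) * (y k * poly (DP T k) y) := by
      intro k
      rw [dPoly_eq T hS k y]
      push_cast
      ring
    rw [Finset.sum_congr rfl fun k _ => h k, ← Finset.mul_sum, euler]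
    try push_cast
    try ring

lemma second_deriv_data {m : ℕ} (T : Tensor m) (hS : IsSym T) (hTF : IsTraceFree T) :
    ∃ u'' : Fin 3 → Fin 3 → E3 → ℝ,
      (∀ (k : Fin 3) (y : E3), HasFDerivAt (dPoly T k) (∑ i : Fin 3, u'' k i y • proj3 i) y)
      ∧ (∀ x : E3, ∑ k : Fin 3, u'' k k x = 0) := by
  match m, T, hS, hTF with
  | 0, T, hS, hTF =>
    refine ⟨fun _ _ _ => 0, fun k y => ?_, fun x => by simp⟩
    have h0 : (dPoly T k) = fun _ : E3 => (0:ℝ) := funext fun y => dPoly_rank_zero T k y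
    rw [h0]
    have h1 : (∑ i : Fin 3, (0:ℝ) • proj3 i) = 0 := by simp
    rw [h1]
    exact hasFDerivAt_const 0 y
  | (m'+1), T, hS, hTF =>
    refine ⟨fun k i y => ((m'+1:ℕ):ℝ) * dPoly (DP T k) i y, fun k y => ?_, fun x => ?_⟩
    · have h1 : dPoly T k = fun y => ((m'+1:ℕ):ℝ) * poly (DP T k) y := by
        funext y
        rw [dPoly_eq T hS k y]
        push_cast
        ring
      rw [h1]
      have h2 := (hasFDerivAt_poly (DP T k) y).const_mul ((m'+1:ℕ):ℝ)
      have h3 : ((m'+1:ℕ):ℝ) • (∑ i : Fin 3, dPoly (DP T k) i y • proj3 i)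
          = ∑ i : Fin 3, (((m'+1:ℕ):ℝ) * dPoly (DP T k) i y) • proj3 i := by
        rw [Finset.smul_sum]
        exact Finset.sum_congr rfl fun i _ => by rw [smul_smul]
      rw [h3] at h2
      exact h2
    · rw [← Finset.mul_sum]
      have hz : ∑ k : Fin 3, dPoly (DP T k) k x = 0 := by
        match m', T, hS, hTF with
        | 0, T, hS, hTF => simp [dPoly_rank_zero]
        | (m''+1), T, hS, hTF =>
          have h4 : ∀ k : Fin 3, dPoly (DP T k) k x
              = ((m''+1:ℕ):ℝ) * poly (DP (DP T k) k) x := by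
            intro k
            rw [dPoly_eq (DP T k) (DP_isSym hS k) k x]
            push_cast
            ring
          rw [Finset.sum_congr rfl fun k _ => h4 k, ← Finset.mul_sum]
          have h5 : ∑ k : Fin 3, poly (DP (DP T k) k) x = 0 := by
            refine poly_sum_eq_zero _ (fun t => ?_) x
            exact trace_sum T hTF t
          rw [h5, mul_zero]
      rw [hz, mul_zero]

lemma lapMain {m : ℕ} (T : Tensor m) (hS : IsSym T) (hTF : IsTraceFree T) (A c : ℂ)
    (x : E3) (hx : x ≠ 0) :
    lap (fun y => A * ↑(poly T y) * ((↑(N2 y):ℂ)) ^ c) x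
      = A * (2*c*(2*c + 2*(m:ℂ) + 1)) * ↑(poly T x) * ((↑(N2 x):ℂ)) ^ (c-1) := by
  obtain ⟨u'', hu'', hdiag⟩ := second_deriv_data T hS hTF
  rw [lapG A c (poly T) (dPoly T) u'' (fun y => hasFDerivAt_poly T y) hu'' x hx]
  rw [hdiag x, euler_dPoly T hS x]
  push_cast
  ring

/-! ### Locality of the Laplacian -/

lemma lap_congr (f g : E3 → ℂ) (h : ∀ y : E3, y ≠ 0 → f y = g y) (x : E3) (hx : x ≠ 0) :
    lap f x = lap g x := by
  have hU : {(0:E3)}ᶜ ∈ nhds x := compl_singleton_mem_nhds hx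
  rw [lap, lap]
  refine Finset.sum_congr rfl fun i _ => ?_
  have h1 : ∀ y : E3, y ≠ 0 → fderiv ℝ f y = fderiv ℝ g y := by
    intro y hy
    have hev : f =ᶠ[nhds y] g :=
      Filter.eventuallyEq_of_mem (compl_singleton_mem_nhds hy) (fun z hz => h z hz)
    exact hev.fderiv_eq
  have h2 : (fun y => fderiv ℝ f y (EuclideanSpace.single i 1)) =ᶠ[nhds x]
      (fun y => fderiv ℝ g y (EuclideanSpace.single i 1)) :=
    Filter.eventuallyEq_of_mem hU (fun y hy => by rw [h1 y hy])
  rw [h2.fderiv_eq]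

lemma lap_iter_congr : ∀ (n : ℕ) (f g : E3 → ℂ), (∀ y : E3, y ≠ 0 → f y = g y) →
    ∀ x : E3, x ≠ 0 → lap^[n] f x = lap^[n] g x := by
  intro n
  induction n with
  | zero => intro f g h x hx; exact h x hx
  | succ n ih =>
    intro f g h x hx
    rw [Function.iterate_succ_apply, Function.iterate_succ_apply]
    exact ih (lap f) (lap g) (fun y hy => lap_congr f g h y hy) x hx

/-! ### The STF projection -/

abbrev HT (l : ℕ) := EuclideanSpace ℝ (Fin l → Fin 3)

def STFsub (l : ℕ) : Submodule ℝ (HT l) where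
  carrier := {T | IsSTF (T : Tensor l)}
  add_mem' := by
    rintro a b ⟨hs1, ht1⟩ ⟨hs2, ht2⟩
    refine ⟨fun σ I => ?_, fun p q hpq I => ?_⟩
    · show (a + b) (I ∘ σ) = (a + b) I
      simp only [PiLp.add_apply]
      rw [hs1 σ I, hs2 σ I]
    · show ∑ c : Fin 3, (a + b) (Function.update (Function.update I p c) q c) = 0
      simp only [PiLp.add_apply]
      rw [Finset.sum_add_distrib, ht1 p q hpq I, ht2 p q hpq I, add_zero]
  zero_mem' := by
    refine ⟨fun σ I => ?_, fun p q hpq I => ?_⟩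
    · show (0 : HT l) (I ∘ σ) = (0 : HT l) I
      simp
    · show ∑ c : Fin 3, (0 : HT l) (Function.update (Function.update I p c) q c) = 0
      simp
  smul_mem' := by
    rintro c a ⟨hs1, ht1⟩
    refine ⟨fun σ I => ?_, fun p q hpq I => ?_⟩
    · show (c • a) (I ∘ σ) = (c • a) I
      simp only [PiLp.smul_apply, smul_eq_mul]
      rw [hs1 σ I]
    · show ∑ d : Fin 3, (c • a) (Function.update (Function.update I p d) q d) = 0
      simp only [PiLp.smul_apply, smul_eq_mul]
      rw [← Finset.mul_sum, ht1 p q hpq I, mul_zero]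

def STFproj (l : ℕ) (T : Tensor l) : Tensor l :=
  ((STFsub l).orthogonalProjectionOnto (WithLp.toLp 2 T) : HT l).ofLp

lemma tInner_eq_inner {l : ℕ} (S T : HT l) : tInner (S : Tensor l) (T : Tensor l) = inner ℝ S T := by
  rw [tInner, PiLp.inner_apply]
  refine Finset.sum_congr rfl fun I _ => ?_
  simp [RCLike.inner_apply, mul_comm]

lemma STFproj_isSTF (l : ℕ) (T : Tensor l) : IsSTF (STFproj l T) :=
  ((STFsub l).orthogonalProjectionOnto (WithLp.toLp 2 T)).2

lemma isSTFPartOf_STFproj (l : ℕ) (T : Tensor l) : IsSTFPartOf (STFproj l T) T := by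
  refine ⟨STFproj_isSTF l T, fun S hS => ?_⟩
  have hmem := Submodule.sub_starProjection_mem_orthogonal (K := STFsub l) (WithLp.toLp 2 T)
  have h := (Submodule.mem_orthogonal _ _).1 hmem (WithLp.toLp 2 S) hS
  have := tInner_eq_inner (WithLp.toLp 2 S : HT l)
    (WithLp.toLp 2 T - (STFsub l).starProjection (WithLp.toLp 2 T))
  rw [h] at this
  rw [tInner, ← this, tInner]
  exact Finset.sum_congr rfl fun I _ => mul_comm _ _

lemma tInner_comm {l : ℕ} (S T : Tensor l) : tInner S T = tInner T S :=
  Finset.sum_congr rfl fun I _ => mul_comm _ _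

lemma tInner_sub_left {l : ℕ} (S T U : Tensor l) :
    tInner (S - T) U = tInner S U - tInner T U := by
  rw [tInner, tInner, tInner, ← Finset.sum_sub_distrib]
  exact Finset.sum_congr rfl fun I _ => by rw [Pi.sub_apply, sub_mul]

lemma isSTF_sub {l : ℕ} {A B : Tensor l} (hA : IsSTF A) (hB : IsSTF B) : IsSTF (A - B) := by
  refine ⟨fun σ I => ?_, fun p q hpq I => ?_⟩
  · rw [Pi.sub_apply, Pi.sub_apply, hA.1 σ I, hB.1 σ I]
  · simp only [Pi.sub_apply]
    rw [Finset.sum_sub_distrib, hA.2 p q hpq I, hB.2 p q hpq I, sub_zero]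

lemma stfPart_unique {l : ℕ} {A B T : Tensor l} (hA : IsSTFPartOf A T) (hB : IsSTFPartOf B T) :
    A = B := by
  have hAB : IsSTF (A - B) := isSTF_sub hA.1 hB.1
  have h1 := hA.2 (A - B) hAB
  have h2 := hB.2 (A - B) hAB
  have h3 : tInner (A - B) (A - B) = 0 := by
    have h4 : (T - B) - (T - A) = A - B := by abel
    have h5 := tInner_sub_left (T - B) (T - A) (A - B)
    rw [h4] at h5
    rw [h5, h1, h2, sub_zero]
  have h5 : ∀ I : Fin l → Fin 3, (A - B) I = 0 := by
    intro I
    have h6 := (Finset.sum_eq_zero_iff_of_nonneg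
      (fun J _ => mul_self_nonneg ((A - B) J))).1 h3 I (Finset.mem_univ I)
    exact mul_self_eq_zero.1 h6
  funext I
  have := h5 I
  rw [Pi.sub_apply] at this
  linarith

def eb {l : ℕ} (I : Fin l → Fin 3) : Tensor l := fun J => if J = I then 1 else 0

lemma tInner_eb {l : ℕ} (S : Tensor l) (I : Fin l → Fin 3) : tInner S (eb I) = S I := by
  rw [tInner]
  have h : ∀ J : Fin l → Fin 3, S J * eb I J = if J = I then S J else 0 := by
    intro J
    by_cases hJ : J = I <;> simp [eb, hJ]
  rw [Finset.sum_congr rfl fun J _ => h J, Finset.sum_ite_eq']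
  simp

lemma STFproj_selfadj (l : ℕ) (S T : Tensor l) :
    tInner (STFproj l S) T = tInner S (STFproj l T) := by
  have h1 := (isSTFPartOf_STFproj l T).2 _ (STFproj_isSTF l S)
  have h2 := (isSTFPartOf_STFproj l S).2 _ (STFproj_isSTF l T)
  rw [tInner_sub_left] at h1 h2
  calc tInner (STFproj l S) T
      = tInner T (STFproj l S) := tInner_comm _ _
    _ = tInner (STFproj l T) (STFproj l S) := by linarith
    _ = tInner (STFproj l S) (STFproj l T) := tInner_comm _ _
    _ = tInner S (STFproj l T) := by linarith

lemma STFproj_apply_eq (l : ℕ) (W : Tensor l) (I : Fin l → Fin 3) :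
    STFproj l W I = tInner (W : Tensor l) (STFproj l (eb I)) := by
  rw [← tInner_eb (STFproj l W) I, ← STFproj_selfadj]

/-! ### cpow conversions and double factorial constants -/

lemma norm_cpow_eq_N2 (x : E3) (hx : x ≠ 0) (w : ℂ) :
    ((‖x‖ : ℝ):ℂ) ^ w = ((N2 x : ℝ):ℂ) ^ (w/2) := by
  have hr : (0:ℝ) < ‖x‖ := norm_pos_iff.mpr hx
  have h1 : ((‖x‖:ℝ):ℂ) ≠ 0 := by exact_mod_cast hr.ne'
  have h2 : ((N2 x : ℝ):ℂ) ≠ 0 := N2_ne_zeroC hx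
  rw [Complex.cpow_def_of_ne_zero h1, Complex.cpow_def_of_ne_zero h2]
  congr 1
  have hlogN : Complex.log ((N2 x : ℝ):ℂ) = 2 * Complex.log ((‖x‖:ℝ):ℂ) := by
    rw [← Complex.ofReal_log (N2_pos hx).le, ← Complex.ofReal_log hr.le]
    rw [N2_eq_norm, Real.log_pow]
    push_cast
    ring
  rw [hlogN]
  ring

def Kc (l i : ℕ) : ℝ := ((2*l+1)‼ : ℝ) / (((2*i)‼ : ℝ) * ((2*l+2*i+1)‼ : ℝ))

lemma dfac_ne {n : ℕ} : ((n‼ : ℕ) : ℝ) ≠ 0 := by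
  exact_mod_cast (Nat.doubleFactorial_pos n).ne'

lemma Kc_zero (l : ℕ) : Kc l 0 = 1 := by
  rw [Kc]
  norm_num [Nat.doubleFactorial]
  exact (Nat.doubleFactorial_pos _).ne'

lemma Kc_succ (l n : ℕ) :
    Kc l (n+1) * (2*((n:ℝ)+1)*(2*((n:ℝ)+1) + 2*(l:ℝ) + 1)) = Kc l n := by
  have f1 : (((2*(n+1))‼ : ℕ) : ℝ) = ((2*n:ℕ):ℝ) * (((2*n)‼ : ℕ):ℝ) + 2 * (((2*n)‼ : ℕ):ℝ) := by
    rw [show 2*(n+1) = (2*n)+2 from by ring, Nat.doubleFactorial_add_two]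
    push_cast
    ring
  have f2 : (((2*l+2*(n+1)+1)‼ : ℕ) : ℝ)
      = ((2*l+2*n+1:ℕ):ℝ) * (((2*l+2*n+1)‼ : ℕ):ℝ) + 2 * (((2*l+2*n+1)‼ : ℕ):ℝ) := by
    rw [show 2*l+2*(n+1)+1 = (2*l+2*n+1)+2 from by ring, Nat.doubleFactorial_add_two]
    push_cast
    ring
  rw [Kc, Kc, f1, f2]
  have h1 : (((2*n)‼ : ℕ):ℝ) ≠ 0 := dfac_ne
  have h2 : (((2*l+2*n+1)‼ : ℕ):ℝ) ≠ 0 := dfac_ne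
  have h3 : ((2*n:ℕ):ℝ) + 2 ≠ 0 := by positivity
  have h4 : ((2*l+2*n+1:ℕ):ℝ) + 2 ≠ 0 := by positivity
  field_simp
  push_cast
  ring

end Aux

theorem stmt19 (l : ℕ) (s : ℂ)
    (Nl : E3 → Tensor l)
    (hNl : ∀ x : E3, x ≠ 0 →
      IsSTFPartOf (Nl x) (vecPow (fun i => x i / ‖x‖) l)) :
    (∀ x : E3, x ≠ 0 → ∀ I : Fin l → Fin 3,
      lap (fun y => (Nl y I : ℂ) * (‖y‖ : ℂ) ^ s) x
        = (s - l) * (s + l + 1) * (Nl x I : ℂ) * (‖x‖ : ℂ) ^ (s - 2)) ∧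
    (∀ i : ℕ, ∀ x : E3, x ≠ 0 → ∀ I : Fin l → Fin 3,
      lap^[i]
        (fun y => ((((2 * l + 1)‼ : ℝ) / (((2 * i)‼ : ℝ) * ((2 * l + 2 * i + 1)‼ : ℝ))
            * ‖y‖ ^ (2 * i) * (‖y‖ ^ l * Nl y I) : ℝ) : ℂ)) x
        = ((‖x‖ ^ l * Nl x I : ℝ) : ℂ)) := by
  have hproj : ∀ x : E3, x ≠ 0 → Nl x = Aux.STFproj l (vecPow (fun i => x i / ‖x‖) l) :=
    fun x hx => Aux.stfPart_unique (hNl x hx) (Aux.isSTFPartOf_STFproj l _)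
  have hTIstf : ∀ I : Fin l → Fin 3, IsSTF (Aux.STFproj l (Aux.eb I)) :=
    fun I => Aux.STFproj_isSTF l _
  have hbridge : ∀ x : E3, x ≠ 0 → ∀ I : Fin l → Fin 3,
      ‖x‖ ^ l * Nl x I = Aux.poly (Aux.STFproj l (Aux.eb I)) x := by
    intro x hx I
    rw [hproj x hx, Aux.STFproj_apply_eq, tInner, Aux.poly, Finset.mul_sum]
    refine Finset.sum_congr rfl fun J _ => ?_
    have hr : (0:ℝ) < ‖x‖ := norm_pos_iff.mpr hx
    have hv : vecPow (fun i => x i / ‖x‖) l J = (∏ j : Fin l, x (J j)) / ‖x‖ ^ l := by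
      rw [vecPow, Finset.prod_div_distrib, Finset.prod_const, Finset.card_univ, Fintype.card_fin]
    rw [hv]
    have hpl : (‖x‖ : ℝ) ^ l ≠ 0 := pow_ne_zero _ hr.ne'
    field_simp
  constructor
  · -- Part 1
    intro x hx I
    have hptw : ∀ y : E3, y ≠ 0 → (Nl y I : ℂ) * (‖y‖ : ℂ) ^ s
        = (1:ℂ) * ↑(Aux.poly (Aux.STFproj l (Aux.eb I)) y) * ((Aux.N2 y : ℝ):ℂ) ^ ((s - (l:ℂ))/2) := by
      intro y hy
      have hr : (0:ℝ) < ‖y‖ := norm_pos_iff.mpr hy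
      have h0 : ((‖y‖:ℝ):ℂ) ≠ 0 := by exact_mod_cast hr.ne'
      have hP : (↑(Aux.poly (Aux.STFproj l (Aux.eb I)) y) : ℂ) = ↑(Nl y I) * ((‖y‖:ℝ):ℂ)^(l:ℂ) := by
        rw [← hbridge y hy I]
        push_cast [Complex.cpow_natCast]
        ring
      have h2 : ((Aux.N2 y : ℝ):ℂ)^((s - (l:ℂ))/2) = ((‖y‖:ℝ):ℂ)^(s - (l:ℂ)) :=
        (Aux.norm_cpow_eq_N2 y hy _).symm
      rw [one_mul, hP, h2, mul_assoc, ← Complex.cpow_add _ _ h0,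
        show (l:ℂ) + (s - (l:ℂ)) = s from by ring]
    have e1 := Aux.lap_congr (fun y => (Nl y I : ℂ) * (‖y‖ : ℂ) ^ s)
      (fun y => (1:ℂ) * ↑(Aux.poly (Aux.STFproj l (Aux.eb I)) y)
        * ((Aux.N2 y : ℝ):ℂ) ^ ((s - (l:ℂ))/2)) hptw x hx
    rw [e1, Aux.lapMain (Aux.STFproj l (Aux.eb I)) (hTIstf I).1 (hTIstf I).2 1 ((s - (l:ℂ))/2) x hx]
    have hr : (0:ℝ) < ‖x‖ := norm_pos_iff.mpr hx
    have h0 : ((‖x‖:ℝ):ℂ) ≠ 0 := by exact_mod_cast hr.ne'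
    have hPx : (↑(Aux.poly (Aux.STFproj l (Aux.eb I)) x) : ℂ) = ↑(Nl x I) * ((‖x‖:ℝ):ℂ)^(l:ℂ) := by
      rw [← hbridge x hx I]
      push_cast [Complex.cpow_natCast]
      ring
    have hc1 : ((Aux.N2 x : ℝ):ℂ)^((s - (l:ℂ))/2 - 1) = ((‖x‖:ℝ):ℂ)^(s - (l:ℂ) - 2) := by
      rw [Aux.norm_cpow_eq_N2 x hx (s - (l:ℂ) - 2)]
      congr 1
      ring
    have hmul : ((‖x‖:ℝ):ℂ)^(l:ℂ) * ((‖x‖:ℝ):ℂ)^(s - (l:ℂ) - 2) = ((‖x‖:ℝ):ℂ)^(s-2) := by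
      rw [← Complex.cpow_add _ _ h0]
      congr 1
      ring
    rw [hPx, hc1, ← hmul]
    ring
  · -- Part 2
    intro i x hx I
    have key : ∀ (n : ℕ) (z : E3), z ≠ 0 →
        lap^[n] (fun y => ((Aux.Kc l n : ℝ):ℂ) * ↑(Aux.poly (Aux.STFproj l (Aux.eb I)) y)
            * ((Aux.N2 y : ℝ):ℂ) ^ ((n:ℕ):ℂ)) z
          = ↑(Aux.poly (Aux.STFproj l (Aux.eb I)) z) := by
      intro n
      induction n with
      | zero =>
        intro z hz
        rw [Function.iterate_zero_apply]
        simp [Aux.Kc_zero]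
      | succ n ih =>
        intro z hz
        rw [Function.iterate_succ_apply]
        have hstep : ∀ y : E3, y ≠ 0 →
            lap (fun y => ((Aux.Kc l (n+1) : ℝ):ℂ) * ↑(Aux.poly (Aux.STFproj l (Aux.eb I)) y)
                * ((Aux.N2 y : ℝ):ℂ) ^ (((n+1:ℕ)):ℂ)) y
              = ((Aux.Kc l n : ℝ):ℂ) * ↑(Aux.poly (Aux.STFproj l (Aux.eb I)) y)
                * ((Aux.N2 y : ℝ):ℂ) ^ ((n:ℕ):ℂ) := by
          intro y hy
          rw [Aux.lapMain (Aux.STFproj l (Aux.eb I)) (hTIstf I).1 (hTIstf I).2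
            (↑(Aux.Kc l (n+1))) (((n+1:ℕ)):ℂ) y hy]
          have he : ((((n+1:ℕ)):ℂ)) - 1 = ((n:ℕ):ℂ) := by push_cast; ring
          rw [he]
          have hsc : (↑(Aux.Kc l (n+1)) : ℂ)
              * (2*(((n+1:ℕ)):ℂ)*(2*(((n+1:ℕ)):ℂ) + 2*((l:ℕ):ℂ) + 1)) = ↑(Aux.Kc l n) := by
            have := Aux.Kc_succ l n
            calc (↑(Aux.Kc l (n+1)) : ℂ) * (2*(((n+1:ℕ)):ℂ)*(2*(((n+1:ℕ)):ℂ) + 2*((l:ℕ):ℂ) + 1))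
                = ↑(Aux.Kc l (n+1) * (2*((n:ℝ)+1)*(2*((n:ℝ)+1) + 2*(l:ℝ) + 1))) := by
                  push_cast
                  ring
              _ = ↑(Aux.Kc l n) := by rw [this]
          rw [hsc]
        rw [Aux.lap_iter_congr n _ _ hstep z hz, ih z hz]
    have hFQ : ∀ y : E3, y ≠ 0 →
        ((((2 * l + 1)‼ : ℝ) / (((2 * i)‼ : ℝ) * ((2 * l + 2 * i + 1)‼ : ℝ))
            * ‖y‖ ^ (2 * i) * (‖y‖ ^ l * Nl y I) : ℝ) : ℂ)
          = ((Aux.Kc l i : ℝ):ℂ) * ↑(Aux.poly (Aux.STFproj l (Aux.eb I)) y)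
            * ((Aux.N2 y : ℝ):ℂ) ^ ((i:ℕ):ℂ) := by
      intro y hy
      rw [hbridge y hy I]
      have hN : (‖y‖:ℝ) ^ (2*i) = (Aux.N2 y)^i := by
        rw [pow_mul, Aux.N2_eq_norm]
      rw [hN, Complex.cpow_natCast, Aux.Kc]
      push_cast
      ring
    have e2 := Aux.lap_iter_congr i
      (fun y => ((((2 * l + 1)‼ : ℝ) / (((2 * i)‼ : ℝ) * ((2 * l + 2 * i + 1)‼ : ℝ))
            * ‖y‖ ^ (2 * i) * (‖y‖ ^ l * Nl y I) : ℝ) : ℂ))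
      (fun y => ((Aux.Kc l i : ℝ):ℂ) * ↑(Aux.poly (Aux.STFproj l (Aux.eb I)) y)
            * ((Aux.N2 y : ℝ):ℂ) ^ ((i:ℕ):ℂ)) hFQ x hx
    rw [e2, key i x hx, hbridge x hx I]

end
end
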